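/- Let M ⊆ ℤ be a nonempty integer interval and let (λ_k)_{k∈M}, (μ_k)_{k∈M} be interlaced real sequences with no finite accumulation point such that Σ_{k∈M}(μ_k − λ_k) = Δ < ∞. Then for every nonreal ζ the series Σ_{k∈M} Δ/(τ_k (λ_k − ζ)) converges absolutely and F(ζ) − 1 = Σ_{k∈M} Δ/(τ_k (λ_k − ζ)), where F(ζ) := ∏_{k∈M} (μ_k − ζ)/(λ_k − ζ). -/

import Mathlib

open Filter Topology

section aux

theorem pfA {F : Type*} [Field F] {ι : Type*} [DecidableEq ι] (a b : ι → F) :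
    ∀ S : Finset ι, (∀ i ∈ S, ∀ j ∈ S, a i = a j → i = j) →
    ∀ z : F, (∀ k ∈ S, a k ≠ z) →
      (∏ k ∈ S, (b k - z) / (a k - z)) - 1
        = ∑ k ∈ S, ((b k - a k) * ∏ j ∈ S.erase k, (b j - a k) / (a j - a k)) / (a k - z) := by
  intro S
  induction S using Finset.induction_on with
  | empty => simp
  | @insert m S hm ih =>
    intro hinj z hz
    have hmM : m ∈ insert m S := Finset.mem_insert_self m S
    have hzs : ∀ k ∈ S, a k ≠ z := fun k hk => hz k (Finset.mem_insert_of_mem hk)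
    have hinjS : ∀ i ∈ S, ∀ j ∈ S, a i = a j → i = j := fun i hi j hj =>
      hinj i (Finset.mem_insert_of_mem hi) j (Finset.mem_insert_of_mem hj)
    have ham : ∀ k ∈ S, a k ≠ a m := by
      intro k hk heq
      exact hm (by rwa [hinj k (Finset.mem_insert_of_mem hk) m hmM heq] at hk)
    have IH1 := ih hinjS z hzs
    have IH2 := ih hinjS (a m) ham
    rw [sub_eq_iff_eq_add] at IH1 IH2
    rw [Finset.prod_insert hm, Finset.sum_insert hm, Finset.erase_insert hm]
    have hrw : ∀ k ∈ S, ((b k - a k) * ∏ j ∈ (insert m S).erase k, (b j - a k) / (a j - a k)) / (a k - z)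
        = ((b m - a k) / (a m - a k)) * (((b k - a k) * ∏ j ∈ S.erase k, (b j - a k) / (a j - a k)) / (a k - z)) := by
      intro k hk
      have hkm : k ≠ m := fun h => hm (h ▸ hk)
      rw [Finset.erase_insert_of_ne hkm.symm, Finset.prod_insert (by simp [hm])]
      ring
    rw [Finset.sum_congr rfl hrw, IH1, IH2]
    have hmz : a m - z ≠ 0 := sub_ne_zero_of_ne (hz m hmM)
    set c : ι → F := fun k => (b k - a k) * ∏ j ∈ S.erase k, (b j - a k) / (a j - a k) with hc
    have key : ∀ k ∈ S,
        ((b m - z) / (a m - z)) * (c k / (a k - z))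
          = ((b m - a m) * (c k / (a k - a m))) / (a m - z)
            + ((b m - a k) / (a m - a k)) * (c k / (a k - z)) := by
      intro k hk
      have h1 : a k - z ≠ 0 := sub_ne_zero_of_ne (hzs k hk)
      have h2 : a k - a m ≠ 0 := sub_ne_zero_of_ne (ham k hk)
      have h3 : a m - a k ≠ 0 := fun h => h2 (by linear_combination -h)
      field_simp
      ring
    calc (b m - z) / (a m - z) * (∑ k ∈ S, c k / (a k - z) + 1) - 1
        = ∑ k ∈ S, ((b m - z) / (a m - z)) * (c k / (a k - z)) + ((b m - z) / (a m - z) - 1) := by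
          rw [mul_add, mul_one, Finset.mul_sum]; ring
      _ = ∑ k ∈ S, (((b m - a m) * (c k / (a k - a m))) / (a m - z)
            + ((b m - a k) / (a m - a k)) * (c k / (a k - z))) + (b m - a m) / (a m - z) := by
          rw [Finset.sum_congr rfl key]
          congr 1
          field_simp
          ring
      _ = (b m - a m) * (∑ k ∈ S, c k / (a k - a m) + 1) / (a m - z)
            + ∑ k ∈ S, (b m - a k) / (a m - a k) * (c k / (a k - z)) := by
          rw [Finset.sum_add_distrib, mul_add, mul_one, add_div, Finset.mul_sum, Finset.sum_div]
          ring

theorem pfB{F : Type*} [Field F] {ι : Type*} [DecidableEq ι] (a b : ι → F) :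
    ∀ S : Finset ι, (∀ i ∈ S, ∀ j ∈ S, a i = a j → i = j) →
      ∑ k ∈ S, (b k - a k) * ∏ j ∈ S.erase k, (b j - a k) / (a j - a k)
        = ∑ k ∈ S, (b k - a k) := by
  intro S
  induction S using Finset.induction_on with
  | empty => simp
  | @insert m S hm ih =>
    intro hinj
    have hmM : m ∈ insert m S := Finset.mem_insert_self m S
    have hinjS : ∀ i ∈ S, ∀ j ∈ S, a i = a j → i = j := fun i hi j hj =>
      hinj i (Finset.mem_insert_of_mem hi) j (Finset.mem_insert_of_mem hj)
    have ham : ∀ k ∈ S, a k ≠ a m := by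
      intro k hk heq
      exact hm (by rwa [hinj k (Finset.mem_insert_of_mem hk) m hmM heq] at hk)
    have IH2 := pfA a b S hinjS (a m) ham
    rw [sub_eq_iff_eq_add] at IH2
    rw [Finset.sum_insert hm, Finset.sum_insert hm, Finset.erase_insert hm, IH2]
    set c : ι → F := fun k => (b k - a k) * ∏ j ∈ S.erase k, (b j - a k) / (a j - a k) with hc
    have hrw : ∀ k ∈ S, (b k - a k) * ∏ j ∈ (insert m S).erase k, (b j - a k) / (a j - a k)
        = c k - (b m - a m) * (c k / (a k - a m)) := by
      intro k hk
      have hkm : k ≠ m := fun h => hm (h ▸ hk)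
      have h2 : a k - a m ≠ 0 := sub_ne_zero_of_ne (ham k hk)
      rw [Finset.erase_insert_of_ne hkm.symm, Finset.prod_insert (by simp [hm])]
      have h3 : a m - a k ≠ 0 := fun h => h2 (by linear_combination -h)
      simp only [hc]
      generalize (∏ j ∈ S.erase k, (b j - a k) / (a j - a k)) = p
      field_simp
      ring
    have hS := Finset.sum_congr rfl hrw
    rw [hS, Finset.sum_sub_distrib, ← Finset.mul_sum, Finset.mul_sum]
    have : ∑ k ∈ S, c k = ∑ k ∈ S, (b k - a k) := ih hinjS
    have e0 : ∑ k ∈ S, ((b k - a k) * ∏ j ∈ S.erase k, (b j - a k) / (a j - a k)) / (a k - a m)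
        = ∑ i ∈ S, c i / (a i - a m) := rfl
    rw [e0, ← Finset.mul_sum, this]
    ring

lemma abs_log_one_add_le' {x : ℝ} (hx : |x| ≤ 1/2) : |Real.log (1 + x)| ≤ 2 * |x| := by
  have h1 : (0:ℝ) < 1 + x := by cases abs_le.mp hx; linarith
  rw [abs_le]
  constructor
  · have h2 := Real.log_le_sub_one_of_pos (show (0:ℝ) < (1+x)⁻¹ by positivity)
    rw [Real.log_inv] at h2
    have h3 : (1+x)⁻¹ - 1 = -x/(1+x) := by field_simp; ring
    rw [h3] at h2
    have h4 : -x/(1+x) ≤ 2*|x| := by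
      rw [div_le_iff₀ h1]
      have := abs_le.mp hx
      cases le_or_gt x 0 with
      | inl h => nlinarith [abs_of_nonpos h]
      | inr h => nlinarith [abs_of_pos h]
    linarith
  · have h2 := Real.log_le_sub_one_of_pos h1
    have := abs_nonneg x
    have := le_abs_self x
    linarith

lemma multipliable_one_add_real {ι : Type*} (f : ι → ℝ) (hf : Summable f)
    (hpos : ∀ i, 0 < 1 + f i) : Multipliable (fun i => 1 + f i) := by
  apply Real.multipliable_of_summable_log hpos
  apply Summable.of_norm_bounded_eventually (g := fun i => 2 * |f i|) (hf.abs.mul_left 2)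
  have := hf.tendsto_cofinite_zero
  have hev : ∀ᶠ i in cofinite, |f i| ≤ 1/2 := by
    have h5 := this (Metric.closedBall_mem_nhds (0:ℝ) (by norm_num : (0:ℝ) < 1/2))
    have h6 : ∀ᶠ i in cofinite, f i ∈ Metric.closedBall (0:ℝ) (1/2) := h5
    filter_upwards [h6] with i hi
    simpa [Metric.mem_closedBall, Real.dist_eq] using hi
  filter_upwards [hev] with i hi
  simpa [Real.norm_eq_abs] using abs_log_one_add_le' hi

lemma multipliable_one_add_complex {ι : Type*} (f : ι → ℂ) (hf : Summable fun i => ‖f i‖)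
    (hne : ∀ i, 1 + f i ≠ 0) : Multipliable (fun i => 1 + f i) := by
  apply Complex.multipliable_of_summable_log
  apply Summable.of_norm_bounded_eventually (g := fun i => 3/2 * ‖f i‖) (hf.mul_left _)
  have := hf.tendsto_cofinite_zero
  have hev : ∀ᶠ i in cofinite, ‖f i‖ ≤ 1/2 := by
    have h5 := this (Metric.closedBall_mem_nhds (0:ℝ) (by norm_num : (0:ℝ) < 1/2))
    have h6 : ∀ᶠ i in cofinite, ‖f i‖ ∈ Metric.closedBall (0:ℝ) (1/2) := h5
    filter_upwards [h6] with i hi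
    simpa [Metric.mem_closedBall, Real.dist_eq, abs_of_nonneg (norm_nonneg _)] using hi
  filter_upwards [hev] with i hi
  exact Complex.norm_log_one_add_half_le_self hi

end aux

/-- With F(ζ) = ∏_{k∈M} (μ_k − ζ)/(λ_k − ζ) and τ_n as before, for every
nonreal ζ the series Σ_{k∈M} Δ/(τ_k (λ_k − ζ)) converges absolutely and
F(ζ) − 1 = Σ_{k∈M} Δ/(τ_k (λ_k − ζ)). -/
theorem two_spectra_mittag_leffler
    (M : Set ℤ) (hM : M.Nonempty)
    (hMint : ∀ a b c : ℤ, a ∈ M → c ∈ M → a ≤ b → b ≤ c → b ∈ M)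
    (lam mu : ℤ → ℝ)
    (hinter₁ : ∀ k ∈ M, lam k < mu k)
    (hinter₂ : ∀ k : ℤ, k ∈ M → k + 1 ∈ M → mu k < lam (k + 1))
    (hacc : ∀ R : ℝ, 0 < R → {k ∈ M | |lam k| ≤ R}.Finite)
    (Δ : ℝ)
    (hsum : HasSum (fun k : M => mu (k : ℤ) - lam (k : ℤ)) Δ)
    (τ : ℤ → ℝ)
    (hτ : ∀ n ∈ M,
      (τ n)⁻¹ = (mu n - lam n) / Δ *
        ∏' k : {k : M // (k : ℤ) ≠ n},
          (mu ((k : M) : ℤ) - lam n) / (lam ((k : M) : ℤ) - lam n)) :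
    ∀ ζ : ℂ, ζ.im ≠ 0 →
      Summable (fun k : M => ‖(Δ : ℂ) / ((τ (k : ℤ) : ℂ) * ((lam (k : ℤ) : ℂ) - ζ))‖) ∧
      (∏' k : M, ((mu (k : ℤ) : ℂ) - ζ) / ((lam (k : ℤ) : ℂ) - ζ)) - 1 =
        ∑' k : M, (Δ : ℂ) / ((τ (k : ℤ) : ℂ) * ((lam (k : ℤ) : ℂ) - ζ)) := by
  classical
  -- basic order facts
  have hml : ∀ j k : ℤ, j ∈ M → k ∈ M → j < k → mu j < lam k := by
    intro j k hj hk hjk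
    have H : ∀ k, j + 1 ≤ k → (k ∈ M → mu j < lam k) := by
      apply Int.le_induction
      · intro h1; exact hinter₂ j hj h1
      · intro n hn ihn hn1M
        have hnM : n ∈ M := hMint j n (n + 1) hj hn1M (by omega) (by omega)
        exact lt_trans (lt_trans (ihn hnM) (hinter₁ n hnM)) (hinter₂ n hnM hn1M)
    exact H k (by omega) hk
  have hlt : ∀ j k : ↥M, (j : ℤ) < (k : ℤ) → lam ↑j < lam ↑k := by
    intro j k h
    exact lt_trans (hinter₁ ↑j j.2) (hml ↑j ↑k j.2 k.2 h)
  have hinjR : ∀ i j : ↥M, lam ↑i = lam ↑j → i = j := by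
    intro i j hij
    rcases lt_trichotomy (i : ℤ) (j : ℤ) with h | h | h
    · exact absurd hij (ne_of_lt (hlt i j h))
    · exact Subtype.ext h
    · exact absurd hij.symm (ne_of_lt (hlt j i h))
  set d : ↥M → ℝ := fun k => mu ↑k - lam ↑k with hd
  have hdpos : ∀ k : ↥M, 0 < d k := fun k => sub_pos.mpr (hinter₁ ↑k k.2)
  have hΔpos : 0 < Δ := by
    obtain ⟨k0, hk0⟩ := hM
    exact lt_of_lt_of_le (hdpos ⟨k0, hk0⟩)
      (le_hasSum hsum ⟨k0, hk0⟩ fun j _ => (hdpos j).le)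
  have hdsum : Summable d := hsum.summable
  have hsum_d_le : ∀ S : Finset ↥M, ∑ k ∈ S, d k ≤ Δ :=
    fun S => sum_le_hasSum S (fun k _ => (hdpos k).le) hsum
  have hrpos : ∀ k j : ↥M, (j : ℤ) ≠ (k : ℤ) →
      0 < (mu ↑j - lam ↑k) / (lam ↑j - lam ↑k) := by
    intro k j hjk
    rcases lt_or_gt_of_ne hjk with h | h
    · have h1 : mu ↑j < lam ↑k := hml ↑j ↑k j.2 k.2 h
      have h2 : lam ↑j < lam ↑k := hlt j k h
      exact div_pos_of_neg_of_neg (by linarith) (by linarith)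
    · have h1 : mu ↑k < lam ↑j := hml ↑k ↑j k.2 j.2 h
      have h2 : lam ↑k < lam ↑j := hlt k j h
      have h3 : lam ↑j < mu ↑j := hinter₁ ↑j j.2
      exact div_pos (by linarith) (by linarith)
  -- finite sets of small lam
  have hfinsub : ∀ R : ℝ, 0 < R → {k : ↥M | |lam ↑k| ≤ R}.Finite := by
    intro R hR
    have h1 := hacc R hR
    have h2 : {k : ↥M | |lam ↑k| ≤ R} ⊆ (fun k : ↥M => (k : ℤ)) ⁻¹' {k ∈ M | |lam k| ≤ R} := by
      intro k hk
      exact ⟨k.2, hk⟩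
    exact Set.Finite.subset (h1.preimage (Subtype.val_injective.injOn)) h2
  -- the per-k infinite products
  set g : ∀ k : ↥M, {j : ↥M // (j : ℤ) ≠ (k : ℤ)} → ℝ :=
    fun k j => (mu ↑↑j - lam ↑k) / (lam ↑↑j - lam ↑k) with hg
  have hgform : ∀ (k : ↥M) (j : {j : ↥M // (j : ℤ) ≠ (k : ℤ)}),
      g k j = 1 + d ↑j / (lam ↑↑j - lam ↑k) := by
    intro k j
    have hne : lam ↑↑j - lam ↑k ≠ 0 := by
      rcases lt_or_gt_of_ne j.2 with h | h
      · exact ne_of_lt (sub_neg.mpr (hlt ↑j k h))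
      · exact ne_of_gt (sub_pos.mpr (hlt k ↑j h))
    simp only [hg, hd]
    rw [one_add_div hne]
    congr 1
    ring
  have hsummable_g : ∀ k : ↥M, Summable (fun j : {j : ↥M // (j : ℤ) ≠ (k : ℤ)} =>
      d ↑j / (lam ↑↑j - lam ↑k)) := by
    intro k
    have hcomp : Summable (fun j : {j : ↥M // (j : ℤ) ≠ (k : ℤ)} => d ↑j) :=
      hdsum.comp_injective Subtype.val_injective
    apply Summable.of_norm_bounded_eventually
      (g := fun j : {j : ↥M // (j : ℤ) ≠ (k : ℤ)} => d ↑j) hcomp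
    have hfin : {j : {j : ↥M // (j : ℤ) ≠ (k : ℤ)} | |lam ↑↑j - lam ↑k| < 1}.Finite := by
      have h1 : {j : {j : ↥M // (j : ℤ) ≠ (k : ℤ)} | |lam ↑↑j - lam ↑k| < 1} ⊆
          (fun j : {j : ↥M // (j : ℤ) ≠ (k : ℤ)} => (↑j : ↥M)) ⁻¹'
            {j : ↥M | |lam ↑j| ≤ |lam ↑k| + 1} := by
        intro j hj
        simp only [Set.mem_setOf_eq, Set.mem_preimage] at hj ⊢
        have h := abs_sub_abs_le_abs_sub (lam ↑↑j) (lam ↑k)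
        linarith
      exact Set.Finite.subset
        ((hfinsub (|lam ↑k| + 1) (by positivity)).preimage Subtype.val_injective.injOn) h1
    rw [Filter.eventually_cofinite]
    apply hfin.subset
    intro j hj
    simp only [Set.mem_setOf_eq, not_le] at hj ⊢
    by_contra hcon
    push_neg at hcon
    have hd1 : 0 < d ↑j := hdpos ↑j
    have hb : ‖d ↑j / (lam ↑↑j - lam ↑k)‖ ≤ d ↑j := by
      rw [norm_div, Real.norm_eq_abs, Real.norm_eq_abs, abs_of_pos hd1]
      rw [div_le_iff₀ (by linarith : (0:ℝ) < |lam ↑↑j - lam ↑k|)]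
      nlinarith
    linarith
  have hmulg : ∀ k : ↥M, Multipliable (g k) := by
    intro k
    have h1 : Multipliable (fun j : {j : ↥M // (j : ℤ) ≠ (k : ℤ)} =>
        1 + d ↑j / (lam ↑↑j - lam ↑k)) :=
      multipliable_one_add_real _ (hsummable_g k)
        (fun j => by rw [← hgform k j]; exact hrpos k ↑j j.2)
    exact h1.congr (fun j => (hgform k j).symm)
  -- coefficients
  set Pi : ↥M → ℝ := fun k => ∏' j : {j : ↥M // (j : ℤ) ≠ (k : ℤ)}, g k j with hPi
  set cS : Finset ↥M → ↥M → ℝ := fun S k =>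
    (mu ↑k - lam ↑k) * ∏ j ∈ S.erase k, (mu ↑j - lam ↑k) / (lam ↑j - lam ↑k) with hcS
  set cl : ↥M → ℝ := fun k => (mu ↑k - lam ↑k) * Pi k with hcl
  -- convergence of coefficients
  have htendk : ∀ k : ↥M, Tendsto (fun S : Finset ↥M => cS S k) atTop (𝓝 (cl k)) := by
    intro k
    have hP : HasProd (g k) (Pi k) := (hmulg k).hasProd
    set φ : Finset ↥M → Finset {j : ↥M // (j : ℤ) ≠ (k : ℤ)} :=
      fun S => (S.erase k).subtype _ with hφ
    have hφmono : Monotone φ := fun S T h => Finset.subtype_mono (Finset.erase_subset_erase _ h)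
    have hφtop : Tendsto φ atTop atTop := by
      apply Filter.tendsto_atTop_finset_of_monotone hφmono
      intro j
      refine ⟨{↑j, k}, ?_⟩
      have hjk : (↑j : ↥M) ≠ k := fun h => j.2 (congrArg _ h)
      simp [hφ, Finset.mem_subtype, Finset.mem_erase, hjk]
    have hcong : ∀ S : Finset ↥M,
        (∏ t ∈ φ S, g k t) = ∏ j ∈ S.erase k, (mu ↑j - lam ↑k) / (lam ↑j - lam ↑k) := by
      intro S
      apply Finset.prod_subtype_of_mem (fun j : ↥M => (mu ↑j - lam ↑k) / (lam ↑j - lam ↑k))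
      intro x hx
      exact fun h => (Finset.mem_erase.mp hx).1 (Subtype.ext h)
    have h2 : Tendsto (fun S : Finset ↥M => ∏ t ∈ φ S, g k t) atTop (𝓝 (Pi k)) :=
      hP.comp hφtop
    have h3 := h2.const_mul (mu ↑k - lam ↑k)
    apply h3.congr
    intro S
    rw [hcong S]
  -- positivity and sum identity
  have hcSpos : ∀ (S : Finset ↥M) (k : ↥M), 0 ≤ cS S k := by
    intro S k
    apply mul_nonneg (hdpos k).le
    apply Finset.prod_nonneg
    intro j hj
    exact (hrpos k j (fun h => (Finset.mem_erase.mp hj).1 (Subtype.ext h))).le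
  have hBid : ∀ S : Finset ↥M, ∑ k ∈ S, cS S k = ∑ k ∈ S, d k := by
    intro S
    exact pfB (fun k : ↥M => lam ↑k) (fun k : ↥M => mu ↑k) S
      (fun i _ j _ h => hinjR i j h)
  have hcS_le : ∀ S : Finset ↥M, ∑ k ∈ S, cS S k ≤ Δ := by
    intro S
    rw [hBid S]; exact hsum_d_le S
  -- cl bounds
  have hclnn : ∀ k : ↥M, 0 ≤ cl k := by
    intro k
    exact ge_of_tendsto (htendk k) (Filter.Eventually.of_forall fun S => hcSpos S k)
  have hcl_partial : ∀ S : Finset ↥M, ∑ k ∈ S, cl k ≤ Δ := by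
    intro S
    have h1 : Tendsto (fun T : Finset ↥M => ∑ k ∈ S, cS T k) atTop (𝓝 (∑ k ∈ S, cl k)) :=
      tendsto_finset_sum S (fun k _ => htendk k)
    apply le_of_tendsto h1
    filter_upwards [Filter.eventually_ge_atTop S] with T hT
    calc ∑ k ∈ S, cS T k ≤ ∑ k ∈ T, cS T k :=
          Finset.sum_le_sum_of_subset_of_nonneg hT (fun k _ _ => hcSpos T k)
      _ ≤ Δ := hcS_le T
  have hclsum : Summable cl := summable_of_sum_le (fun k => hclnn k) hcl_partial
  have hcltsum_le : ∑' k, cl k ≤ Δ := hclsum.tsum_le_of_sum_le hcl_partial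
  -- now fix ζ
  intro ζ hζ
  have himpos : 0 < |ζ.im| := abs_pos.mpr hζ
  have haim : ∀ x : ℝ, |ζ.im| ≤ ‖(x:ℂ) - ζ‖ := by
    intro x
    have h1 : |((x:ℂ) - ζ).im| ≤ ‖(x:ℂ) - ζ‖ := Complex.abs_im_le_norm ((x:ℂ) - ζ)
    simpa [Complex.sub_im, Complex.ofReal_im] using h1
  have haζ : ∀ x : ℝ, (x:ℂ) - ζ ≠ 0 := by
    intro x h
    have h2 := haim x
    rw [h, norm_zero] at h2
    exact not_le.mpr himpos h2
  have hΔτ : ∀ k : ↥M, Δ * (τ ↑k)⁻¹ = cl k := by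
    intro k
    rw [hτ ↑k k.2]
    have hPieq : (∏' (j : {j : ↥M // (j : ℤ) ≠ (↑k : ℤ)}),
        (mu ↑↑j - lam ↑k) / (lam ↑↑j - lam ↑k)) = Pi k := rfl
    rw [hPieq]
    simp only [hcl]
    field_simp
  have hterm : ∀ k : ↥M,
      (Δ:ℂ) / ((τ ↑k : ℂ) * ((lam ↑k : ℂ) - ζ)) = (cl k : ℂ) / ((lam ↑k : ℂ) - ζ) := by
    intro k
    rw [div_eq_mul_inv, div_eq_mul_inv, mul_inv, ← mul_assoc]
    congr 1
    rw [← Complex.ofReal_inv, ← Complex.ofReal_mul, hΔτ k]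
  have hnorm_eq : ∀ k : ↥M, ‖(cl k : ℂ) / ((lam ↑k : ℂ) - ζ)‖ = cl k / ‖(lam ↑k : ℂ) - ζ‖ := by
    intro k
    rw [norm_div, Complex.norm_real, Real.norm_eq_abs, abs_of_nonneg (hclnn k)]
  have hnormle : ∀ k : ↥M, ‖(cl k : ℂ) / ((lam ↑k : ℂ) - ζ)‖ ≤ cl k * |ζ.im|⁻¹ := by
    intro k
    rw [hnorm_eq k, div_eq_mul_inv]
    exact mul_le_mul_of_nonneg_left (inv_anti₀ himpos (haim _)) (hclnn k)
  have hsummable_norm : Summable (fun k : ↥M => ‖(cl k : ℂ) / ((lam ↑k : ℂ) - ζ)‖) :=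
    Summable.of_nonneg_of_le (fun k => norm_nonneg _) hnormle (hclsum.mul_right _)
  have hsumζ : Summable (fun k : ↥M => (cl k : ℂ) / ((lam ↑k : ℂ) - ζ)) :=
    Summable.of_norm hsummable_norm
  have hpart1 : Summable (fun k : ↥M => ‖(Δ:ℂ) / ((τ ↑k : ℂ) * ((lam ↑k : ℂ) - ζ))‖) :=
    hsummable_norm.congr (fun k => by rw [hterm k])
  refine ⟨hpart1, ?_⟩
  -- the product
  have hratio_eq : (fun k : ↥M => ((mu ↑k : ℂ) - ζ) / ((lam ↑k : ℂ) - ζ))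
      = fun k : ↥M => 1 + (d k : ℂ) / ((lam ↑k : ℂ) - ζ) := by
    funext k
    have hx := haζ (lam ↑k)
    rw [div_eq_iff hx, add_mul, one_mul, div_mul_cancel₀ _ hx]
    simp only [hd]
    push_cast
    ring
  have hmulP : Multipliable (fun k : ↥M => ((mu ↑k : ℂ) - ζ) / ((lam ↑k : ℂ) - ζ)) := by
    rw [hratio_eq]
    apply multipliable_one_add_complex
    · apply Summable.of_nonneg_of_le (fun k => norm_nonneg _) _ (hdsum.mul_right |ζ.im|⁻¹)
      intro k
      rw [norm_div, Complex.norm_real, Real.norm_eq_abs, abs_of_nonneg (hdpos k).le,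
        div_eq_mul_inv]
      exact mul_le_mul_of_nonneg_left (inv_anti₀ himpos (haim _)) (hdpos k).le
    · intro k
      rw [← congrFun hratio_eq k]
      exact div_ne_zero (haζ (mu ↑k)) (haζ (lam ↑k))
  have htendP : Tendsto (fun S : Finset ↥M =>
      (∏ k ∈ S, ((mu ↑k : ℂ) - ζ) / ((lam ↑k : ℂ) - ζ)) - 1) atTop
      (𝓝 ((∏' k : ↥M, ((mu ↑k : ℂ) - ζ) / ((lam ↑k : ℂ) - ζ)) - 1)) :=
    (hmulP.hasProd).sub_const 1
  -- identity on finite sets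
  have hident : ∀ S : Finset ↥M,
      (∏ k ∈ S, ((mu ↑k : ℂ) - ζ) / ((lam ↑k : ℂ) - ζ)) - 1
        = ∑ k ∈ S, ((cS S k : ℝ) : ℂ) / ((lam ↑k : ℂ) - ζ) := by
    intro S
    have h1 := pfA (fun k : ↥M => ((lam ↑k : ℝ) : ℂ)) (fun k : ↥M => ((mu ↑k : ℝ) : ℂ)) S
      (fun i _ j _ h => hinjR i j (by simpa using Complex.ofReal_injective (by simpa using h))) ζ
      (fun k _ h => haζ (lam ↑k) (by rw [h]; ring))
    rw [h1]
    apply Finset.sum_congr rfl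
    intro k hk
    congr 1
    simp only [hcS]
    push_cast [Complex.ofReal_prod]
    ring
  set L : ℂ := ∑' k : ↥M, (cl k : ℂ) / ((lam ↑k : ℂ) - ζ) with hL
  have htendR : Tendsto (fun S : Finset ↥M =>
      ∑ k ∈ S, ((cS S k : ℝ) : ℂ) / ((lam ↑k : ℂ) - ζ)) atTop (𝓝 L) := by
    rw [Metric.tendsto_nhds]
    intro ε hε
    have hρpos : (0:ℝ) < 3 * Δ / ε + 1 := by positivity
    set ρ : ℝ := 3 * Δ / ε + 1 with hρdef
    have hρ3 : Δ / ρ < ε / 3 := by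
      rw [div_lt_iff₀ hρpos]
      have hh : ε / 3 * ρ = Δ + ε / 3 := by
        rw [hρdef]; field_simp
      rw [hh]; linarith
    set R : ℝ := ‖ζ‖ + ρ with hRdef
    have hRpos : 0 < R := by positivity
    have hKfin : {k : ↥M | |lam ↑k| ≤ R}.Finite := hfinsub R hRpos
    set K : Finset ↥M := hKfin.toFinset with hK
    have hρnorm : ∀ k : ↥M, k ∉ K → ρ ≤ ‖((lam ↑k : ℝ) : ℂ) - ζ‖ := by
      intro k hk
      have h1 : R < |lam ↑k| := by
        by_contra hcon
        push_neg at hcon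
        exact hk (by simp only [hK, Set.Finite.mem_toFinset, Set.mem_setOf_eq]; exact hcon)
      have h2 : |lam ↑k| - ‖ζ‖ ≤ ‖((lam ↑k : ℝ) : ℂ) - ζ‖ := by
        have h3 := norm_sub_norm_le ((lam ↑k : ℝ) : ℂ) ζ
        rwa [Complex.norm_real, Real.norm_eq_abs] at h3
      rw [hRdef] at h1
      linarith
    have hhead : Tendsto (fun S : Finset ↥M => ∑ k ∈ K, ((cS S k : ℝ) : ℂ) / ((lam ↑k : ℂ) - ζ))
        atTop (𝓝 (∑ k ∈ K, (cl k : ℂ) / ((lam ↑k : ℂ) - ζ))) := by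
      apply tendsto_finset_sum
      intro k _
      exact ((Complex.continuous_ofReal.tendsto _).comp (htendk k)).div_const _
    have hheadev := Metric.tendsto_nhds.mp hhead (ε / 3) (by positivity)
    have hcompl := hsumζ.sum_add_tsum_subtype_compl K
    have hclcompl : ∑' (x : {x : ↥M // x ∉ K}), cl ↑x ≤ Δ := by
      have h1 := hclsum.sum_add_tsum_subtype_compl K
      have h2 : 0 ≤ ∑ x ∈ K, cl x := Finset.sum_nonneg fun k _ => hclnn k
      linarith [hcltsum_le]
    have hsub_norm : Summable (fun x : {x : ↥M // x ∉ K} =>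
        ‖(cl ↑x : ℂ) / ((lam ↑↑x : ℂ) - ζ)‖) :=
      hsummable_norm.comp_injective Subtype.val_injective
    have hsub_cl : Summable (fun x : {x : ↥M // x ∉ K} => cl ↑x) :=
      hclsum.comp_injective Subtype.val_injective
    have htail2 : ‖∑' (x : {x : ↥M // x ∉ K}), (cl ↑x : ℂ) / ((lam ↑↑x : ℂ) - ζ)‖ ≤ ε / 3 := by
      calc ‖∑' (x : {x : ↥M // x ∉ K}), (cl ↑x : ℂ) / ((lam ↑↑x : ℂ) - ζ)‖
          ≤ ∑' (x : {x : ↥M // x ∉ K}), ‖(cl ↑x : ℂ) / ((lam ↑↑x : ℂ) - ζ)‖ :=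
            norm_tsum_le_tsum_norm hsub_norm
        _ ≤ ∑' (x : {x : ↥M // x ∉ K}), cl ↑x * ρ⁻¹ := by
            apply Summable.tsum_le_tsum _ hsub_norm (hsub_cl.mul_right _)
            intro x
            rw [hnorm_eq ↑x, div_eq_mul_inv]
            exact mul_le_mul_of_nonneg_left
              (inv_anti₀ hρpos (hρnorm ↑x x.2)) (hclnn ↑x)
        _ = (∑' (x : {x : ↥M // x ∉ K}), cl ↑x) * ρ⁻¹ := tsum_mul_right
        _ ≤ Δ * ρ⁻¹ := mul_le_mul_of_nonneg_right hclcompl (by positivity)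
        _ = Δ / ρ := by rw [div_eq_mul_inv]
        _ ≤ ε / 3 := hρ3.le
    filter_upwards [hheadev, Filter.eventually_ge_atTop K] with S hS1 hS2
    rw [dist_eq_norm]
    rw [dist_eq_norm] at hS1
    have hsplit : ∑ k ∈ S, ((cS S k : ℝ) : ℂ) / ((lam ↑k : ℂ) - ζ)
        = ∑ k ∈ S \ K, ((cS S k : ℝ) : ℂ) / ((lam ↑k : ℂ) - ζ)
          + ∑ k ∈ K, ((cS S k : ℝ) : ℂ) / ((lam ↑k : ℂ) - ζ) :=
      (Finset.sum_sdiff hS2).symm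
    have htail1 : ‖∑ k ∈ S \ K, ((cS S k : ℝ) : ℂ) / ((lam ↑k : ℂ) - ζ)‖ ≤ ε / 3 := by
      calc ‖∑ k ∈ S \ K, ((cS S k : ℝ) : ℂ) / ((lam ↑k : ℂ) - ζ)‖
          ≤ ∑ k ∈ S \ K, ‖((cS S k : ℝ) : ℂ) / ((lam ↑k : ℂ) - ζ)‖ := norm_sum_le _ _
        _ ≤ ∑ k ∈ S \ K, cS S k * ρ⁻¹ := by
            apply Finset.sum_le_sum
            intro k hk
            rw [norm_div, Complex.norm_real, Real.norm_eq_abs,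
              abs_of_nonneg (hcSpos S k), div_eq_mul_inv]
            exact mul_le_mul_of_nonneg_left
              (inv_anti₀ hρpos (hρnorm k (Finset.mem_sdiff.mp hk).2)) (hcSpos S k)
        _ = (∑ k ∈ S \ K, cS S k) * ρ⁻¹ := by rw [Finset.sum_mul]
        _ ≤ (∑ k ∈ S, cS S k) * ρ⁻¹ := by
            apply mul_le_mul_of_nonneg_right _ (by positivity)
            exact Finset.sum_le_sum_of_subset_of_nonneg Finset.sdiff_subset
              (fun k _ _ => hcSpos S k)
        _ ≤ Δ * ρ⁻¹ := mul_le_mul_of_nonneg_right (hcS_le S) (by positivity)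
        _ = Δ / ρ := by rw [div_eq_mul_inv]
        _ ≤ ε / 3 := hρ3.le
    calc ‖∑ k ∈ S, ((cS S k : ℝ) : ℂ) / ((lam ↑k : ℂ) - ζ) - L‖
        = ‖(∑ k ∈ K, ((cS S k : ℝ) : ℂ) / ((lam ↑k : ℂ) - ζ)
              - ∑ k ∈ K, (cl k : ℂ) / ((lam ↑k : ℂ) - ζ))
            + ∑ k ∈ S \ K, ((cS S k : ℝ) : ℂ) / ((lam ↑k : ℂ) - ζ)
            + -(∑' (x : {x : ↥M // x ∉ K}), (cl ↑x : ℂ) / ((lam ↑↑x : ℂ) - ζ))‖ := by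
          congr 1
          rw [hsplit, hL, ← hcompl]
          ring
      _ ≤ ‖∑ k ∈ K, ((cS S k : ℝ) : ℂ) / ((lam ↑k : ℂ) - ζ)
              - ∑ k ∈ K, (cl k : ℂ) / ((lam ↑k : ℂ) - ζ)‖
            + ‖∑ k ∈ S \ K, ((cS S k : ℝ) : ℂ) / ((lam ↑k : ℂ) - ζ)‖
            + ‖-(∑' (x : {x : ↥M // x ∉ K}), (cl ↑x : ℂ) / ((lam ↑↑x : ℂ) - ζ))‖ :=
          norm_add₃_le
      _ < ε := by
          rw [norm_neg]
          linarith
  have hfinal := tendsto_nhds_unique (Filter.Tendsto.congr (fun S => hident S) htendP) htendR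
  rw [hfinal]
  exact (tsum_congr fun k => hterm k).symm
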